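/- Overestimate property of IEU for S-extension: let S = α ⊗ i be obtained from sequence α by appending a new itemset {i}. Then for any q-sequence Q containing S, u(S,Q) ≤ IEU(S,Q), where IEU(S,Q) = max over ending positions p of α in Q with i in the (p+1)-th q-itemset of (u(α,p,Q) + u(i,p+1,Q) + ru(Q/(i,p+1))). -/

import Mathlib

open scoped Classical

/-- A sequence: a finite list of itemsets (finite sets of items). -/
abbrev PatSeq := List (Finset ℕ)

/-- `S` is a contiguous sub-sequence of `S'`: there is a contiguous block `T`
of `S'` such that each itemset of `S` is a subset of the corresponding itemset of `T`. -/
def CSub (S S' : PatSeq) : Prop :=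
  ∃ T : PatSeq, List.Forall₂ (· ⊆ ·) S T ∧ T <:+: S'

/-- `Q` has an instance of `S` at ending position `p`
(0-indexed index of the last itemset of the instance). -/
def Inst (Q S : PatSeq) (p : ℕ) : Prop :=
  S.length ≤ p + 1 ∧ p < Q.length ∧
    ∀ j < S.length, S.getD j ∅ ⊆ Q.getD (p + 1 - S.length + j) ∅

/-- `Q` contains `S`: it has at least one instance of `S`. -/
def Contains (Q S : PatSeq) : Prop := ∃ p, Inst Q S p

/-- Utility of the instance of `S` ending at position `p`, where `w j i` is the
(nonnegative) utility of item `i` in the `j`-th q-itemset. -/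
def instUtil (w : ℕ → ℕ → ℕ) (S : PatSeq) (p : ℕ) : ℕ :=
  ∑ j ∈ Finset.range S.length, ∑ i ∈ S.getD j ∅, w (p + 1 - S.length + j) i

/-- Total utility of the q-sequence `Q`. -/
def qUtil (w : ℕ → ℕ → ℕ) (Q : PatSeq) : ℕ :=
  ∑ j ∈ Finset.range Q.length, ∑ i ∈ Q.getD j ∅, w j i

/-- Utility of `S` in `Q`: the maximum instance utility over all ending positions. -/
noncomputable def seqUtil (w : ℕ → ℕ → ℕ) (Q S : PatSeq) : ℕ :=
  ((Finset.range Q.length).filter (fun p => Inst Q S p)).sup (fun p => instUtil w S p)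

/-- I-extension: append item `i` to the last itemset of `α`. -/
def IExt (α : PatSeq) (i : ℕ) : PatSeq := α.dropLast ++ [insert i (α.getLastD ∅)]

/-- S-extension: append the new itemset `{i}` to `α`. -/
def SExt (α : PatSeq) (i : ℕ) : PatSeq := α ++ [({i} : Finset ℕ)]

/-- Remaining utility of `Q` after the occurrence of item `i` in the `p`-th itemset:
utilities of items after `i` in the `p`-th itemset plus all later itemsets. -/
def ru (w : ℕ → ℕ → ℕ) (Q : PatSeq) (i p : ℕ) : ℕ :=
  (∑ x ∈ (Q.getD p ∅).filter (fun x => i < x), w p x)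
    + ∑ j ∈ Finset.Ico (p + 1) Q.length, ∑ x ∈ Q.getD j ∅, w j x

/-- IEU of the S-extension `α ⊗ i` in `Q`. -/
noncomputable def IEUS (w : ℕ → ℕ → ℕ) (Q α : PatSeq) (i : ℕ) : ℕ :=
  ((Finset.range Q.length).filter
      (fun p => Inst Q α p ∧ i ∈ Q.getD (p + 1) ∅)).sup
    (fun p => instUtil w α p + w (p + 1) i + ru w Q i (p + 1))

/-- Overestimate property of IEU for S-extension. -/
theorem ieu_overestimate_sext (w : ℕ → ℕ → ℕ) (Q α : PatSeq) (i : ℕ)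
    (hα : α ≠ []) (hc : Contains Q (SExt α i)) :
    seqUtil w Q (SExt α i) ≤ IEUS w Q α i := by
  apply Finset.sup_le
  intro p hp
  simp only [Finset.mem_filter, Finset.mem_range] at hp
  obtain ⟨hpQ, hinst⟩ := hp
  obtain ⟨hlen, -, hsub⟩ := hinst
  set n := α.length with hn
  have hlenS : (SExt α i).length = n + 1 := by simp [SExt, hn]
  rw [hlenS] at hlen hsub
  have hn1 : 1 ≤ n := List.length_pos_iff.mpr hα
  have hnp : n ≤ p := Nat.succ_le_succ_iff.mp hlen
  have hp1 : p - 1 + 1 = p := Nat.sub_add_cancel (le_trans hn1 hnp)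
  have harith : ∀ j, p + 1 - (n + 1) + j = p - n + j := by
    intro j; rw [Nat.succ_sub_succ]
  have hgetα : ∀ j, j < n → (SExt α i).getD j ∅ = α.getD j ∅ := by
    intro j hj
    simp [SExt, List.getD, List.getElem?_append_left hj]
  have hgetlast : (SExt α i).getD n ∅ = {i} := by
    simp [SExt, List.getD, List.getElem?_append_right (le_refl n), hn]
  have hiQ : i ∈ Q.getD p ∅ := by
    have := hsub n (Nat.lt_succ_self n)
    rw [hgetlast, harith, Nat.sub_add_cancel hnp] at this
    exact this (Finset.mem_singleton_self i)
  have hinstα : Inst Q α (p - 1) := by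
    refine ⟨by rw [hp1]; exact hnp, lt_of_le_of_lt (Nat.pred_le p) hpQ, ?_⟩
    intro j hj
    have := hsub j (Nat.lt_succ_of_lt hj)
    rw [hgetα j hj, harith] at this
    rw [hp1]
    exact this
  have hmem : p - 1 ∈ (Finset.range Q.length).filter
      (fun q => Inst Q α q ∧ i ∈ Q.getD (q + 1) ∅) := by
    simp only [Finset.mem_filter, Finset.mem_range]
    exact ⟨lt_of_le_of_lt (Nat.pred_le p) hpQ, hinstα, by rw [hp1]; exact hiQ⟩
  refine le_trans ?_ (Finset.le_sup hmem)
  have hsplit : instUtil w (SExt α i) p = instUtil w α (p - 1) + w p i := by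
    unfold instUtil
    rw [hlenS, Finset.sum_range_succ, hgetlast]
    congr 1
    · apply Finset.sum_congr rfl
      intro j hj
      rw [Finset.mem_range] at hj
      rw [hgetα j hj, harith, hp1]
    · rw [harith, Nat.sub_add_cancel hnp, Finset.sum_singleton]
  rw [hsplit, hp1]
  exact le_add_right (le_refl _)
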